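/- arXiv:1306.6107 — 10 statements merged into one kernel-verified Lean document; each statement's English description precedes it below -/
import Mathlib

section
/- Let Λ and Γ be row-finite k-graphs with no sources and let p : Λ → Γ be a surjective k-graph morphism with r-path lifting. If Γ is aperiodic, then Λ is aperiodic. -/
/-- A `k`-graph: a countable category `Λ` (objects `Obj`, morphisms `Mor`, range `r`,
source `s`, identities `ident`, partial composition `comp`) together with a degree
functor `d : Λ → ℕᵏ` satisfying the unique factorisation property. -/
structure KGraph (k : ℕ) where
  Obj : Type
  Mor : Type
  countObj : Countable Obj
  countMor : Countable Mor
  r : Mor → Obj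
  s : Mor → Obj
  ident : Obj → Mor
  comp : (f g : Mor) → s f = r g → Mor
  d : Mor → Fin k → ℕ
  r_ident : ∀ v, r (ident v) = v
  s_ident : ∀ v, s (ident v) = v
  d_ident : ∀ v, d (ident v) = 0
  r_comp : ∀ f g h, r (comp f g h) = r f
  s_comp : ∀ f g h, s (comp f g h) = s g
  d_comp : ∀ f g h, d (comp f g h) = d f + d g
  ident_comp : ∀ (f : Mor) (h : s (ident (r f)) = r f), comp (ident (r f)) f h = f
  comp_ident : ∀ (f : Mor) (h : s f = r (ident (s f))), comp f (ident (s f)) h = f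
  assoc : ∀ (f g e : Mor) (hfg : s f = r g) (hge : s g = r e)
      (h1 : s (comp f g hfg) = r e) (h2 : s f = r (comp g e hge)),
      comp (comp f g hfg) e h1 = comp f (comp g e hge) h2
  factor : ∀ (f : Mor) (m n : Fin k → ℕ), d f = m + n →
      ∃! p : Mor × Mor, d p.1 = m ∧ ∃ h : s p.1 = r p.2, comp p.1 p.2 h = f

namespace KGraph

variable {k : ℕ}

private lemma pi_add_tsub {a b : Fin k → ℕ} (h : a ≤ b) : a + (b - a) = b := by
  funext i
  have hi : a i ≤ b i := h i
  simp only [Pi.add_apply, Pi.sub_apply]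
  omega

/-- For `m ≤ n ≤ d f`, `Λ.seg f m n` is the unique factor `f(m,n)` of degree `n - m`
following an initial segment of degree `m` (junk value `f` otherwise). -/
noncomputable def seg (Λ : KGraph k) (f : Λ.Mor) (m n : Fin k → ℕ) : Λ.Mor :=
  letI := Classical.dec (m ≤ n ∧ n ≤ Λ.d f)
  if h : m ≤ n ∧ n ≤ Λ.d f then
    (Λ.factor (Λ.factor f n (Λ.d f - n) (pi_add_tsub h.2).symm).choose.1
        m (n - m)
        (by
          rw [(Λ.factor f n (Λ.d f - n) (pi_add_tsub h.2).symm).choose_spec.1.1]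
          exact (pi_add_tsub h.1).symm)).choose.2
  else f

/-- `Λ` is row-finite: `vΛⁿ` is finite for every vertex `v` and `n ∈ ℕᵏ`. -/
def RowFinite (Λ : KGraph k) : Prop :=
  ∀ (v : Λ.Obj) (n : Fin k → ℕ), {f : Λ.Mor | Λ.r f = v ∧ Λ.d f = n}.Finite

/-- `Λ` has no sources: `vΛⁿ ≠ ∅` for every vertex `v` and `n ∈ ℕᵏ`. -/
def NoSources (Λ : KGraph k) : Prop :=
  ∀ (v : Λ.Obj) (n : Fin k → ℕ), ∃ f : Λ.Mor, Λ.r f = v ∧ Λ.d f = n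

/-- `Λ` has no sinks: `Λⁿv ≠ ∅` for every vertex `v` and nonzero `n ∈ ℕᵏ`. -/
def NoSinks (Λ : KGraph k) : Prop :=
  ∀ (v : Λ.Obj) (n : Fin k → ℕ), n ≠ 0 → ∃ f : Λ.Mor, Λ.s f = v ∧ Λ.d f = n

/-- `Λ` is cofinal: for all vertices `v, w` there is `N ∈ ℕᵏ` with `vΛs(α) ≠ ∅`
for every `α ∈ wΛ^N`. -/
def Cofinal (Λ : KGraph k) : Prop :=
  ∀ v w : Λ.Obj, ∃ N : Fin k → ℕ, ∀ α, Λ.r α = w → Λ.d α = N →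
    ∃ β, Λ.r β = v ∧ Λ.s β = Λ.s α

/-- `Λ` is strongly connected: for all vertices `u, v` there is `N > 0` with
`uΛ^N v ≠ ∅`. -/
def StronglyConnected (Λ : KGraph k) : Prop :=
  ∀ u v : Λ.Obj, ∃ N : Fin k → ℕ, 0 < N ∧ ∃ f, Λ.r f = u ∧ Λ.s f = v ∧ Λ.d f = N

/-- `Λ` has no local periodicity at `v`. -/
def NoLocalPeriodicity (Λ : KGraph k) (v : Λ.Obj) : Prop :=
  ∀ m n : Fin k → ℕ, m ≠ n → ∃ f, Λ.r f = v ∧ m ⊔ n ≤ Λ.d f ∧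
    Λ.seg f m (m + Λ.d f - (m ⊔ n)) ≠ Λ.seg f n (n + Λ.d f - (m ⊔ n))

/-- `Λ` is aperiodic: no local periodicity at every vertex. -/
def Aperiodic (Λ : KGraph k) : Prop := ∀ v : Λ.Obj, Λ.NoLocalPeriodicity v

/-- `V(n,v)`: sources of paths `λ ∈ vΛ^m` with `m ≤ n`. -/
def Vset (Λ : KGraph k) (n : Fin k → ℕ) (v : Λ.Obj) : Set Λ.Obj :=
  {w | ∃ f : Λ.Mor, Λ.r f = v ∧ Λ.s f = w ∧ Λ.d f ≤ n}

/-- `FV(n,v) = V(n,v) \ ⋃_{i : nᵢ ≥ 1} V(n - eᵢ, v)`. -/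
def FVset (Λ : KGraph k) (n : Fin k → ℕ) (v : Λ.Obj) : Set Λ.Obj :=
  Λ.Vset n v \ ⋃ (i : Fin k) (_ : 1 ≤ n i), Λ.Vset (n - Pi.single i 1) v

/-- The edge relation of the 1-skeleton `E_Λ`: an edge from `v` to `u`
(i.e. a morphism of degree `eᵢ` with range `u` and source `v`). -/
def SkelStep (Λ : KGraph k) (u v : Λ.Obj) : Prop :=
  ∃ (f : Λ.Mor) (i : Fin k), Λ.d f = Pi.single i 1 ∧ Λ.r f = u ∧ Λ.s f = v

/-- The 1-skeleton `E_Λ` is strongly connected: for all vertices `u, v` there is a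
directed path of length `n ≥ 1` from `v` to `u` in `E_Λ`. -/
def SkeletonStronglyConnected (Λ : KGraph k) : Prop :=
  ∀ u v : Λ.Obj, Relation.TransGen Λ.SkelStep u v

/-- The system `(Λ, S, η)` is cofinal. -/
def SystemCofinal (Λ : KGraph k) {S : Type} [Monoid S] (η : Λ.Mor → S) : Prop :=
  ∀ (v w : Λ.Obj) (a b : S), ∃ N : Fin k → ℕ, ∀ α, Λ.r α = w → Λ.d α = N →
    ∃ β, Λ.r β = v ∧ Λ.s β = Λ.s α ∧ a * η β = b * η α

/-- `η : Λ → S` is upper dense: for all `w ∈ Λ⁰`, `a b ∈ S` there is `N ∈ ℕᵏ` such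
that `b·η(α) ≥ₗ a` for every `α ∈ wΛ^N`. -/
def UpperDense (Λ : KGraph k) {S : Type} [Monoid S] (η : Λ.Mor → S) : Prop :=
  ∀ (w : Λ.Obj) (a b : S), ∃ N : Fin k → ℕ, ∀ α, Λ.r α = w → Λ.d α = N →
    ∃ u : S, b * η α = a * u

/-- `t ∈ S` is strictly positive: `{tⁿ : n ≥ 0}` is cofinal in `(S, ≥ₗ)`. -/
def StrictlyPositive {S : Type} [Monoid S] (t : S) : Prop :=
  ∀ s : S, ∃ (n : ℕ) (u : S), t ^ n = s * u

/-- `η` is `S`-primitive for `Λ`: there is a strictly positive `t ∈ S` such that for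
all vertices `v, w` and every `s ≥ₗ t` we have `vη⁻¹(s)w ≠ ∅`. -/
def SPrimitive (Λ : KGraph k) {S : Type} [Monoid S] (η : Λ.Mor → S) : Prop :=
  ∃ t : S, StrictlyPositive t ∧ ∀ (v w : Λ.Obj) (s : S), (∃ u, s = t * u) →
    ∃ f, Λ.r f = v ∧ Λ.s f = w ∧ η f = s

/-- The skew product `k`-graph `Λ ×_η S` of `Λ` by a functor `η : Λ → S`. -/
noncomputable def skewProduct (Λ : KGraph k) (S : Type) [Monoid S] [Countable S]
    (η : Λ.Mor → S) (η_ident : ∀ v, η (Λ.ident v) = 1)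
    (η_comp : ∀ f g h, η (Λ.comp f g h) = η f * η g) : KGraph k where
  Obj := Λ.Obj × S
  Mor := Λ.Mor × S
  countObj := by have := Λ.countObj; exact inferInstance
  countMor := by have := Λ.countMor; exact inferInstance
  r := fun p => (Λ.r p.1, p.2)
  s := fun p => (Λ.s p.1, p.2 * η p.1)
  ident := fun v => (Λ.ident v.1, v.2)
  comp := fun p q h => (Λ.comp p.1 q.1 (congrArg Prod.fst h), p.2)
  d := fun p => Λ.d p.1
  r_ident := fun v => by simp [Λ.r_ident]
  s_ident := fun v => by simp [Λ.s_ident, η_ident]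
  d_ident := fun v => Λ.d_ident v.1
  r_comp := fun f g h => by simp [Λ.r_comp]
  s_comp := fun f g h => by
    have h2 : f.2 * η f.1 = g.2 := congrArg Prod.snd h
    simp only [Λ.s_comp, η_comp, ← mul_assoc, h2]
  d_comp := fun f g h => Λ.d_comp f.1 g.1 (congrArg Prod.fst h)
  ident_comp := fun f h => by
    obtain ⟨f1, f2⟩ := f
    exact Prod.ext (Λ.ident_comp f1 _) rfl
  comp_ident := fun f h => by
    obtain ⟨f1, f2⟩ := f
    exact Prod.ext (Λ.comp_ident f1 _) rfl
  assoc := fun f g e hfg hge h1 h2 =>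
    Prod.ext (Λ.assoc f.1 g.1 e.1 (congrArg Prod.fst hfg) (congrArg Prod.fst hge)
      (congrArg Prod.fst h1) (congrArg Prod.fst h2)) rfl
  factor := by
    rintro ⟨f, t⟩ m n hd
    obtain ⟨⟨μ, ν⟩, ⟨hdμ, hsr, hcomp⟩, huniq⟩ := Λ.factor f m n hd
    refine ⟨((μ, t), (ν, t * η μ)), ⟨hdμ, ?_, ?_⟩, ?_⟩
    · show (Λ.s μ, t * η μ) = (Λ.r ν, t * η μ)
      rw [hsr]
    · exact Prod.ext hcomp rfl
    · rintro ⟨⟨μ', t'⟩, ⟨ν', u'⟩⟩ ⟨hdμ', h', hcomp'⟩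
      have hpair := huniq (μ', ν') ⟨hdμ', congrArg Prod.fst h', congrArg Prod.fst hcomp'⟩
      have hmu : μ' = μ := congrArg Prod.fst hpair
      have hnu : ν' = ν := congrArg Prod.snd hpair
      have ht : t' = t := congrArg Prod.snd hcomp'
      have hu : u' = t' * η μ' := (congrArg Prod.snd h').symm
      subst hmu hnu ht
      simp [hu]

/-- The degree functor viewed as a functor into the (multiplicatively written)
group `ℤᵏ`. -/
noncomputable def dZ (Λ : KGraph k) (f : Λ.Mor) : Multiplicative (Fin k → ℤ) :=
  Multiplicative.ofAdd fun i => (Λ.d f i : ℤ)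

lemma dZ_ident (Λ : KGraph k) (v : Λ.Obj) : Λ.dZ (Λ.ident v) = 1 := by
  simp only [dZ, Λ.d_ident]
  rfl

lemma dZ_comp (Λ : KGraph k) (f g : Λ.Mor) (h : Λ.s f = Λ.r g) :
    Λ.dZ (Λ.comp f g h) = Λ.dZ f * Λ.dZ g := by
  simp only [dZ, Λ.d_comp]
  rw [← ofAdd_add]
  congr 1

/-- The skew product graph `Λ ×_d ℤᵏ` (with `ℤᵏ` written multiplicatively). -/
noncomputable def skewZ (Λ : KGraph k) : KGraph k :=
  letI : Countable (Multiplicative (Fin k → ℤ)) := inferInstanceAs (Countable (Fin k → ℤ))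
  Λ.skewProduct (Multiplicative (Fin k → ℤ)) Λ.dZ Λ.dZ_ident Λ.dZ_comp

end KGraph

/-- A monoid `S` is left-reversible if `sS ∩ tS ≠ ∅` for all `s, t ∈ S`. -/
def LeftReversible (S : Type) [Monoid S] : Prop :=
  ∀ s t : S, ∃ x y : S, s * x = t * y

/-- A `k`-graph morphism: a degree-preserving functor between `k`-graphs. -/
structure KGraphHom {k : ℕ} (Λ Γ : KGraph k) where
  obj : Λ.Obj → Γ.Obj
  mor : Λ.Mor → Γ.Mor
  map_r : ∀ f, Γ.r (mor f) = obj (Λ.r f)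
  map_s : ∀ f, Γ.s (mor f) = obj (Λ.s f)
  map_d : ∀ f, Γ.d (mor f) = Λ.d f
  map_ident : ∀ v, mor (Λ.ident v) = Γ.ident (obj v)
  map_comp : ∀ f g (h : Λ.s f = Λ.r g) (h' : Γ.s (mor f) = Γ.r (mor g)),
    mor (Λ.comp f g h) = Γ.comp (mor f) (mor g) h'

/-- `p` has `r`-path lifting: for every vertex `v` of `Λ` and every `λ ∈ p(v)Γ`
there is `λ' ∈ vΛ` with `p(λ') = λ`. -/
def KGraphHom.RPathLifting {k : ℕ} {Λ Γ : KGraph k} (p : KGraphHom Λ Γ) : Prop :=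
  ∀ (v : Λ.Obj) (g : Γ.Mor), Γ.r g = p.obj v → ∃ f, Λ.r f = v ∧ p.mor f = g

lemma KGraphHom.map_factor {k : ℕ} {Λ Γ : KGraph k} (p : KGraphHom Λ Γ) (f : Λ.Mor)
    (m n : Fin k → ℕ) (h : Λ.d f = m + n) (h' : Γ.d (p.mor f) = m + n) :
    (Γ.factor (p.mor f) m n h').choose =
      (p.mor (Λ.factor f m n h).choose.1, p.mor (Λ.factor f m n h).choose.2) := by
  obtain ⟨⟨hd, hs, hc⟩, -⟩ := (Λ.factor f m n h).choose_spec
  refine ((Γ.factor (p.mor f) m n h').choose_spec.2 _ ?_).symm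
  refine ⟨by rw [p.map_d]; exact hd, ?_⟩
  have hs' : Γ.s (p.mor (Λ.factor f m n h).choose.1)
      = Γ.r (p.mor (Λ.factor f m n h).choose.2) := by
    rw [p.map_s, p.map_r, hs]
  exact ⟨hs', by rw [← p.map_comp _ _ hs hs', hc]⟩

lemma KGraphHom.map_seg {k : ℕ} {Λ Γ : KGraph k} (p : KGraphHom Λ Γ) (f : Λ.Mor)
    (m n : Fin k → ℕ) : p.mor (Λ.seg f m n) = Γ.seg (p.mor f) m n := by
  unfold KGraph.seg
  have hd := p.map_d f
  by_cases h : m ≤ n ∧ n ≤ Λ.d f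
  · have h' : m ≤ n ∧ n ≤ Γ.d (p.mor f) := by rw [hd]; exact h
    rw [dif_pos h, dif_pos h']
    simp only [hd]
    have e1 : Λ.d f = n + (Λ.d f - n) := (KGraph.pi_add_tsub h.2).symm
    have e1' : Γ.d (p.mor f) = n + (Λ.d f - n) := by rw [hd]; exact e1
    have key := p.map_factor f n (Λ.d f - n) e1 e1'
    have e2 : Λ.d (Λ.factor f n (Λ.d f - n) e1).choose.1 = m + (n - m) := by
      rw [(Λ.factor f n (Λ.d f - n) e1).choose_spec.1.1]
      exact (KGraph.pi_add_tsub h.1).symm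
    have e2' : Γ.d (p.mor (Λ.factor f n (Λ.d f - n) e1).choose.1) = m + (n - m) := by
      rw [p.map_d]; exact e2
    have key2 := p.map_factor (Λ.factor f n (Λ.d f - n) e1).choose.1 m (n - m) e2 e2'
    calc p.mor (Λ.factor (Λ.factor f n (Λ.d f - n) e1).choose.1 m (n - m) e2).choose.2
        = (Γ.factor (p.mor (Λ.factor f n (Λ.d f - n) e1).choose.1)
            m (n - m) e2').choose.2 := by rw [key2]
      _ = _ := by
          have hfst : (Γ.factor (p.mor f) n (Λ.d f - n) e1').choose.1
              = p.mor (Λ.factor f n (Λ.d f - n) e1).choose.1 := congrArg Prod.fst key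
          simp only [← hfst]
  · have h' : ¬ (m ≤ n ∧ n ≤ Γ.d (p.mor f)) := by rw [hd]; exact h
    rw [dif_neg h, dif_neg h']

/-- if `p : Λ → Γ` is a surjective `k`-graph morphism with `r`-path
lifting and `Γ` is aperiodic, then `Λ` is aperiodic. -/
theorem aperiodic_of_rPathLifting {k : ℕ} (Λ Γ : KGraph k)
    (hΛrf : Λ.RowFinite) (hΛns : Λ.NoSources) (hΓrf : Γ.RowFinite) (hΓns : Γ.NoSources)
    (p : KGraphHom Λ Γ) (hobj : Function.Surjective p.obj)
    (hmor : Function.Surjective p.mor) (hlift : p.RPathLifting)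
    (hap : Γ.Aperiodic) : Λ.Aperiodic := by
  intro v m n hmn
  obtain ⟨g, hrg, hle, hne⟩ := hap (p.obj v) m n hmn
  obtain ⟨f, hrf, hpf⟩ := hlift v g hrg
  have hdf : Λ.d f = Γ.d g := by rw [← hpf, p.map_d]
  refine ⟨f, hrf, by rw [hdf]; exact hle, ?_⟩
  intro heq
  apply hne
  have := congrArg p.mor heq
  rw [p.map_seg, p.map_seg, hpf] at this
  rw [← hdf]
  exact this
end

section
/- Let Λ be a row-finite k-graph with no sources, S a countable cancellative monoid, and η : Λ → S a functor. If Λ is aperiodic, then the skew product k-graph Λ ×_η S is aperiodic. -/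
namespace KGraph

private lemma factor_choose_eq' (Λ : KGraph k) {g : Λ.Mor} {m n : Fin k → ℕ}
    (h : Λ.d g = m + n) {α β : Λ.Mor} (hα : Λ.d α = m) (h' : Λ.s α = Λ.r β)
    (hc : Λ.comp α β h' = g) : (Λ.factor g m n h).choose = (α, β) :=
  ((Λ.factor g m n h).choose_spec.2 (α, β) ⟨hα, h', hc⟩).symm

private lemma seg_eq' (Λ : KGraph k) {f α β γ : Λ.Mor} {m n : Fin k → ℕ}
    (hmn : m ≤ n) (hnd : n ≤ Λ.d f) (hα : Λ.d α = m) (hβ : Λ.d β = n - m)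
    (h1 : Λ.s α = Λ.r β) (h2 : Λ.s (Λ.comp α β h1) = Λ.r γ)
    (hf : Λ.comp (Λ.comp α β h1) γ h2 = f) :
    Λ.seg f m n = β := by
  unfold seg
  rw [dif_pos ⟨hmn, hnd⟩]
  have hC : (Λ.factor f n (Λ.d f - n) (pi_add_tsub hnd).symm).choose
      = (Λ.comp α β h1, γ) :=
    Λ.factor_choose_eq' (pi_add_tsub hnd).symm
      (by rw [Λ.d_comp, hα, hβ, pi_add_tsub hmn]) h2 hf
  have hC1 : (Λ.factor f n (Λ.d f - n) (pi_add_tsub hnd).symm).choose.1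
      = Λ.comp α β h1 := congrArg Prod.fst hC
  exact congrArg Prod.snd
    (Λ.factor_choose_eq' (by rw [hC1, Λ.d_comp, hα, hβ]) hα h1 hC1.symm)

private lemma skew_seg_fst {Λ : KGraph k} (S : Type) [Monoid S] [Countable S]
    (η : Λ.Mor → S) (hη1 : ∀ v, η (Λ.ident v) = 1)
    (hη2 : ∀ f g h, η (Λ.comp f g h) = η f * η g)
    (f : Λ.Mor) (t : S) (m n : Fin k → ℕ) :
    ((Λ.skewProduct S η hη1 hη2).seg (f, t) m n).1 = Λ.seg f m n := by
  set Γ := Λ.skewProduct S η hη1 hη2 with hΓ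
  by_cases h : m ≤ n ∧ n ≤ Λ.d f
  · -- obtain a decomposition f = (α β) γ with d α = m, d β = n - m
    obtain ⟨⟨p, q⟩, ⟨hp, hpq, hcomp⟩, -⟩ := Λ.factor f n (Λ.d f - n) (pi_add_tsub h.2).symm
    obtain ⟨⟨α, β⟩, ⟨hα, h1, hc⟩, -⟩ := Λ.factor p m (n - m)
      (by rw [hp]; exact (pi_add_tsub h.1).symm)
    have hβ : Λ.d β = n - m := by
      have := Λ.d_comp α β h1
      rw [hc, hp, hα] at this
      funext i
      have h1i := congrFun this i
      have h2i := h.1 i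
      simp only [Pi.add_apply, Pi.sub_apply] at h1i ⊢
      omega
    have h2 : Λ.s (Λ.comp α β h1) = Λ.r q := by rw [hc]; exact hpq
    have hf : Λ.comp (Λ.comp α β h1) q h2 = f := by
      have : Λ.comp (Λ.comp α β h1) q h2 = Λ.comp p q hpq := by
        congr 1
      rw [this, hcomp]
    have hL : Λ.seg f m n = β := Λ.seg_eq' h.1 h.2 hα hβ h1 h2 hf
    -- now the skew product version
    have h1' : Γ.s (α, t) = Γ.r (β, t * η α) := by
      show (Λ.s α, t * η α) = (Λ.r β, t * η α)
      rw [h1]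
    have hcΓ : Γ.comp (α, t) (β, t * η α) h1' = (p, t) := by
      show (Λ.comp α β _, t) = (p, t)
      exact Prod.ext (by rw [← hc]) rfl
    have h2' : Γ.s (Γ.comp (α, t) (β, t * η α) h1') = Γ.r (q, t * η p) := by
      rw [hcΓ]
      show (Λ.s p, t * η p) = (Λ.r q, t * η p)
      rw [hpq]
    have hfΓ : Γ.comp (Γ.comp (α, t) (β, t * η α) h1') (q, t * η p) h2' = (f, t) := by
      have : Γ.comp (Γ.comp (α, t) (β, t * η α) h1') (q, t * η p) h2'
          = Γ.comp (p, t) (q, t * η p) (by rw [← hcΓ]; exact h2') := by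
        congr 1
      rw [this]
      show (Λ.comp p q _, t) = (f, t)
      exact Prod.ext (by rw [← hcomp]) rfl
    have hndΓ : n ≤ Γ.d (f, t) := h.2
    have hαΓ : Γ.d (α, t) = m := hα
    have hβΓ : Γ.d (β, t * η α) = n - m := hβ
    have hG : Γ.seg (f, t) m n = (β, t * η α) :=
      Γ.seg_eq' h.1 hndΓ hαΓ hβΓ h1' h2' hfΓ
    rw [hL, hG]
  · have hG : Γ.seg (f, t) m n = (f, t) := by
      unfold seg
      exact dif_neg h
    have hL : Λ.seg f m n = f := by
      unfold seg
      exact dif_neg h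
    rw [hG, hL]

end KGraph

/-- if `Λ` is aperiodic then the skew product `Λ ×_η S` is aperiodic. -/
theorem skewProduct_aperiodic_of_aperiodic {k : ℕ} (Λ : KGraph k)
    (hrf : Λ.RowFinite) (hns : Λ.NoSources) (S : Type) [CancelMonoid S] [Countable S]
    (η : Λ.Mor → S) (hη1 : ∀ v, η (Λ.ident v) = 1)
    (hη2 : ∀ f g h, η (Λ.comp f g h) = η f * η g) (hap : Λ.Aperiodic) :
    (Λ.skewProduct S η hη1 hη2).Aperiodic := by
  rintro ⟨v, t⟩ m n hmn
  obtain ⟨f, hr, hd, hne⟩ := hap v m n hmn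
  refine ⟨(f, t), ?_, hd, ?_⟩
  · show (Λ.r f, t) = (v, t)
    rw [hr]
  · intro heq
    apply hne
    have := congrArg Prod.fst heq
    rwa [KGraph.skew_seg_fst, KGraph.skew_seg_fst] at this
end

section
/- Suppose S is a countable cancellative monoid, Λ is a row-finite k-graph with no sources, η : Λ → S is a functor, and there exists a map φ : S → ℤ^k such that d = φ ∘ η (that is, φ(η(λ)) = d(λ) for every λ ∈ Λ). Then the skew product k-graph Λ ×_η S is aperiodic. -/
namespace KGraph

private lemma factor_choose_eq {k : ℕ} (Γ : KGraph k) (f : Γ.Mor) (m n : Fin k → ℕ)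
    (hd : Γ.d f = m + n) (g g' : Γ.Mor) (hg : Γ.d g = m) (hsr : Γ.s g = Γ.r g')
    (hc : Γ.comp g g' hsr = f) :
    (Γ.factor f m n hd).choose = (g, g') :=
  ((Γ.factor f m n hd).choose_spec.2 (g, g') ⟨hg, hsr, hc⟩).symm

private lemma seg_eq_ident {k : ℕ} (Γ : KGraph k) (f g g' : Γ.Mor) (m : Fin k → ℕ)
    (hdg : Γ.d g = m) (hsr : Γ.s g = Γ.r g') (hc : Γ.comp g g' hsr = f) :
    Γ.seg f m m = Γ.ident (Γ.s g) := by
  have hle : m ≤ Γ.d f := by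
    rw [← hc, Γ.d_comp, hdg]
    intro i; simp
  unfold KGraph.seg
  rw [dif_pos ⟨le_refl m, hle⟩]
  generalize_proofs hp1 hp2
  have hx1 : hp1.choose.1 = g := by
    have h1 : hp1.choose = (g, g') := (hp1.choose_spec.2 (g, g') ⟨hdg, hsr, hc⟩).symm
    rw [h1]
  have h2 : hp2.choose = (hp1.choose.1, Γ.ident (Γ.s hp1.choose.1)) :=
    (hp2.choose_spec.2 (hp1.choose.1, Γ.ident (Γ.s hp1.choose.1))
      ⟨hp1.choose_spec.1.1, (Γ.r_ident _).symm, Γ.comp_ident _ _⟩).symm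
  rw [h2, hx1]

end KGraph

/-- if there is `φ : S → ℤᵏ` with `d = φ ∘ η`, then the skew product
`Λ ×_η S` is aperiodic. -/
theorem skewProduct_aperiodic_of_degree_factors {k : ℕ} (Λ : KGraph k)
    (hrf : Λ.RowFinite) (hns : Λ.NoSources) (S : Type) [CancelMonoid S] [Countable S]
    (η : Λ.Mor → S) (hη1 : ∀ v, η (Λ.ident v) = 1)
    (hη2 : ∀ f g h, η (Λ.comp f g h) = η f * η g)
    (φ : S → Fin k → ℤ) (hφ : ∀ f : Λ.Mor, φ (η f) = fun i => (Λ.d f i : ℤ)) :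
    (Λ.skewProduct S η hη1 hη2).Aperiodic := by
  set Γ := Λ.skewProduct S η hη1 hη2 with hΓ
  rintro ⟨v, t⟩ m n hmn
  obtain ⟨lam, hr, hd⟩ := hns v (m ⊔ n)
  have hdf : Γ.d (lam, t) = m ⊔ n := hd
  have hlem : m ≤ Γ.d (lam, t) := by rw [hdf]; exact le_sup_left
  have hlen : n ≤ Γ.d (lam, t) := by rw [hdf]; exact le_sup_right
  refine ⟨(lam, t), ?_, ?_, ?_⟩
  · show (Λ.r lam, t) = (v, t)
    rw [hr]
  · exact le_of_eq hdf.symm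
  · have e1 : m + Γ.d (lam, t) - (m ⊔ n) = m := by
      rw [hdf]; funext i
      simp only [Pi.add_apply, Pi.sub_apply, Pi.sup_apply]
      omega
    have e2 : n + Γ.d (lam, t) - (m ⊔ n) = n := by
      rw [hdf]; funext i
      simp only [Pi.add_apply, Pi.sub_apply, Pi.sup_apply]
      omega
    rw [e1, e2]
    intro heq
    have hfm : Γ.d (lam, t) = m + (Γ.d (lam, t) - m) := by
      funext i
      have : m i ≤ Γ.d (lam, t) i := hlem i
      simp only [Pi.add_apply, Pi.sub_apply]
      omega
    have hfn : Γ.d (lam, t) = n + (Γ.d (lam, t) - n) := by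
      funext i
      have : n i ≤ Γ.d (lam, t) i := hlen i
      simp only [Pi.add_apply, Pi.sub_apply]
      omega
    obtain ⟨⟨g, g'⟩, ⟨hdg, hgsr, hgc⟩, -⟩ := Γ.factor (lam, t) m (Γ.d (lam, t) - m) hfm
    obtain ⟨⟨p, p'⟩, ⟨hdp, hpsr, hpc⟩, -⟩ := Γ.factor (lam, t) n (Γ.d (lam, t) - n) hfn
    rw [Γ.seg_eq_ident (lam, t) g g' m hdg hgsr hgc,
        Γ.seg_eq_ident (lam, t) p p' n hdp hpsr hpc] at heq
    have hss : Γ.s g = Γ.s p := by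
      have := congrArg Γ.r heq
      rwa [Γ.r_ident, Γ.r_ident] at this
    -- second components of ranges: g.2 = t and p.2 = t
    have hrg : Γ.r g = Γ.r (lam, t) := by rw [← hgc, Γ.r_comp]
    have hrp : Γ.r p = Γ.r (lam, t) := by rw [← hpc, Γ.r_comp]
    have hg2 : g.2 = t := congrArg Prod.snd hrg
    have hp2 : p.2 = t := congrArg Prod.snd hrp
    have hsnd : g.2 * η g.1 = p.2 * η p.1 := congrArg Prod.snd hss
    rw [hg2, hp2] at hsnd
    have hηe : η g.1 = η p.1 := mul_left_cancel hsnd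
    have hφe := congrArg φ hηe
    rw [hφ, hφ] at hφe
    have hd1 : Λ.d g.1 = m := hdg
    have hd2 : Λ.d p.1 = n := hdp
    apply hmn
    funext i
    have := congrFun hφe i
    rw [hd1, hd2] at this
    exact_mod_cast this
end

section
/- Let Λ be a row-finite k-graph with no sources. Then Λ is strongly connected if and only if its 1-skeleton E_Λ is strongly connected. -/
namespace KGraph

private lemma deg_zero_eq {k : ℕ} (Λ : KGraph k) (g : Λ.Mor) (hg : Λ.d g = 0) :
    Λ.s g = Λ.r g := by
  obtain ⟨p, hp, hu⟩ := Λ.factor g 0 0 (by simp [hg])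
  have hA := hu (Λ.ident (Λ.r g), g)
    ⟨Λ.d_ident _, ⟨Λ.s_ident _, Λ.ident_comp g _⟩⟩
  have hB := hu (g, Λ.ident (Λ.s g))
    ⟨hg, ⟨(Λ.r_ident _).symm, Λ.comp_ident g _⟩⟩
  have h1 : Λ.ident (Λ.r g) = g := congrArg Prod.fst (hA.trans hB.symm)
  have h2 := Λ.s_ident (Λ.r g)
  rw [h1] at h2
  exact h2

private lemma transGen_of_mor {k : ℕ} (Λ : KGraph k) :
    ∀ (n : ℕ) (f : Λ.Mor), (∑ i, Λ.d f i) = n → Λ.d f ≠ 0 →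
      Relation.TransGen Λ.SkelStep (Λ.r f) (Λ.s f) := by
  intro n
  induction n using Nat.strong_induction_on with
  | _ n ih =>
    intro f hsum hne
    have hex : ∃ i, 1 ≤ Λ.d f i := by
      by_contra h
      push_neg at h
      exact hne (funext fun i => by have := h i; simp only [Pi.zero_apply]; omega)
    obtain ⟨i, hi⟩ := hex
    have hle : Pi.single i 1 ≤ Λ.d f := by
      intro j
      by_cases hj : j = i
      · subst hj; simpa using hi
      · simp [Pi.single_apply, hj]
    obtain ⟨⟨μ, ν⟩, ⟨hdμ, hsr, hcomp⟩, -⟩ :=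
      Λ.factor f (Pi.single i 1) (Λ.d f - Pi.single i 1) (pi_add_tsub hle).symm
    have hdf : Λ.d f = Λ.d μ + Λ.d ν := by rw [← hcomp, Λ.d_comp]
    have hrμ : Λ.r μ = Λ.r f := by rw [← hcomp, Λ.r_comp]
    have hsν : Λ.s ν = Λ.s f := by rw [← hcomp, Λ.s_comp]
    have hstep : Λ.SkelStep (Λ.r f) (Λ.r ν) := ⟨μ, i, hdμ, hrμ, hsr⟩
    by_cases hν0 : Λ.d ν = 0
    · have h0 := Λ.deg_zero_eq ν hν0
      rw [← hsν, h0]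
      exact Relation.TransGen.single hstep
    · have hμ1 : (∑ j, Λ.d μ j) = 1 := by
        rw [hdμ]
        simp [Finset.sum_pi_single']
      have hsum' : (∑ j, Λ.d ν j) < n := by
        have : (∑ j, Λ.d f j) = (∑ j, Λ.d μ j) + ∑ j, Λ.d ν j := by
          rw [hdf]; simp [Finset.sum_add_distrib]
        omega
      have ihν := ih _ hsum' ν rfl hν0
      rw [← hsν]
      exact Relation.TransGen.head hstep ihν

private lemma mor_of_transGen {k : ℕ} (Λ : KGraph k) {u v : Λ.Obj}
    (h : Relation.TransGen Λ.SkelStep u v) :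
    ∃ f, Λ.r f = u ∧ Λ.s f = v ∧ Λ.d f ≠ 0 := by
  induction h with
  | single hstep =>
    obtain ⟨f, i, hd, hr, hs⟩ := hstep
    refine ⟨f, hr, hs, ?_⟩
    rw [hd]
    intro h0
    have := congrFun h0 i
    simp at this
  | tail _ hstep ih =>
    obtain ⟨f, hr, hs, hd⟩ := ih
    obtain ⟨g, i, hdg, hrg, hsg⟩ := hstep
    refine ⟨Λ.comp f g (hs.trans hrg.symm), ?_, ?_, ?_⟩
    · rw [Λ.r_comp, hr]
    · rw [Λ.s_comp, hsg]
    · rw [Λ.d_comp]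
      intro h0
      apply hd
      funext j
      have := congrFun h0 j
      simp only [Pi.add_apply, Pi.zero_apply] at this ⊢
      omega

end KGraph

/-- `Λ` is strongly connected iff its 1-skeleton `E_Λ` is strongly
connected. -/
theorem stronglyConnected_iff_skeleton_stronglyConnected {k : ℕ} (Λ : KGraph k)
    (hrf : Λ.RowFinite) (hns : Λ.NoSources) :
    Λ.StronglyConnected ↔ Λ.SkeletonStronglyConnected := by
  constructor
  · intro hsc u v
    obtain ⟨N, hN, f, hr, hs, hd⟩ := hsc u v
    have hne : Λ.d f ≠ 0 := by rw [hd]; exact hN.ne'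
    rw [← hr, ← hs]
    exact Λ.transGen_of_mor _ f rfl hne
  · intro hsk u v
    obtain ⟨f, hr, hs, hd⟩ := Λ.mor_of_transGen (hsk u v)
    exact ⟨Λ.d f, pos_iff_ne_zero.mpr hd, f, hr, hs, rfl⟩
end

section
/- Let Λ and Γ be row-finite k-graphs with no sources and let p : Λ → Γ be a surjective k-graph morphism with r-path lifting. If Λ is cofinal, then Γ is cofinal. -/
/-- if `p : Λ → Γ` is a surjective `k`-graph morphism with `r`-path
lifting and `Λ` is cofinal, then `Γ` is cofinal. -/
theorem cofinal_of_rPathLifting {k : ℕ} (Λ Γ : KGraph k)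
    (hΛrf : Λ.RowFinite) (hΛns : Λ.NoSources) (hΓrf : Γ.RowFinite) (hΓns : Γ.NoSources)
    (p : KGraphHom Λ Γ) (hobj : Function.Surjective p.obj)
    (hmor : Function.Surjective p.mor) (hlift : p.RPathLifting)
    (hcof : Λ.Cofinal) : Γ.Cofinal := by
  intro v w
  obtain ⟨v', hv'⟩ := hobj v
  obtain ⟨w', hw'⟩ := hobj w
  obtain ⟨N, hN⟩ := hcof v' w'
  refine ⟨N, fun α hr hd => ?_⟩
  obtain ⟨α', hrα', hpα'⟩ := hlift w' α (by rw [hr, hw'])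
  obtain ⟨β', hrβ', hsβ'⟩ := hN α' hrα' (by rw [← p.map_d, hpα', hd])
  exact ⟨p.mor β', by rw [p.map_r, hrβ', hv'], by rw [p.map_s, hsβ', ← p.map_s, hpα']⟩
end

section
/- Let Λ be a row-finite k-graph with no sources, S a countable cancellative monoid, and η : Λ → S a functor. Then the system (Λ, S, η) is cofinal if and only if the skew product k-graph Λ ×_η S is cofinal. -/
/-- the system `(Λ, S, η)` is cofinal iff the skew product `Λ ×_η S`
is cofinal. -/
theorem systemCofinal_iff_skewProduct_cofinal {k : ℕ} (Λ : KGraph k)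
    (hrf : Λ.RowFinite) (hns : Λ.NoSources) (S : Type) [CancelMonoid S] [Countable S]
    (η : Λ.Mor → S) (hη1 : ∀ v, η (Λ.ident v) = 1)
    (hη2 : ∀ f g h, η (Λ.comp f g h) = η f * η g) :
    Λ.SystemCofinal η ↔ (Λ.skewProduct S η hη1 hη2).Cofinal := by
  constructor
  · intro hsc
    rintro ⟨v, a⟩ ⟨w, b⟩
    obtain ⟨N, hN⟩ := hsc v w a b
    refine ⟨N, ?_⟩
    rintro ⟨α, t⟩ hr hd
    have ht : t = b := congrArg Prod.snd hr
    obtain ⟨β, hβr, hβs, hβη⟩ := hN α (congrArg Prod.fst hr) hd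
    refine ⟨(β, a), ?_, ?_⟩
    · show (Λ.r β, a) = (v, a); rw [hβr]
    · show (Λ.s β, a * η β) = (Λ.s α, t * η α)
      rw [hβs, hβη, ht]
  · intro hc v w a b
    obtain ⟨N, hN⟩ := hc (v, a) (w, b)
    refine ⟨N, fun α hr hd => ?_⟩
    obtain ⟨⟨β, u⟩, hβr, hβs⟩ := hN (α, b) (by show (Λ.r α, b) = (w, b); rw [hr]) hd
    refine ⟨β, congrArg Prod.fst hβr, congrArg Prod.fst hβs, ?_⟩
    have hu : u = a := congrArg Prod.snd hβr
    have := congrArg Prod.snd hβs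
    subst hu; exact this
end

section
/- Let Λ be a k-graph with no sources, S a left-reversible countable cancellative monoid, and η : Λ → S a functor. If η is S-primitive for Λ and upper dense, then the system (Λ, S, η) is cofinal. -/
/-- if `η` is `S`-primitive for `Λ` and upper dense, then the system
`(Λ, S, η)` is cofinal. -/
theorem systemCofinal_of_sPrimitive_upperDense {k : ℕ} (Λ : KGraph k)
    (hns : Λ.NoSources) (S : Type) [CancelMonoid S] [Countable S]
    (hrev : LeftReversible S) (η : Λ.Mor → S) (hη1 : ∀ v, η (Λ.ident v) = 1)
    (hη2 : ∀ f g h, η (Λ.comp f g h) = η f * η g)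
    (hprim : Λ.SPrimitive η) (hud : Λ.UpperDense η) : Λ.SystemCofinal η := by
  obtain ⟨t, _, ht⟩ := hprim
  intro v w a b
  obtain ⟨N, hN⟩ := hud w (a * t) b
  refine ⟨N, fun α hr hd => ?_⟩
  obtain ⟨u, hu⟩ := hN α hr hd
  obtain ⟨β, hβr, hβs, hβη⟩ := ht v (Λ.s α) (t * u) ⟨u, rfl⟩
  exact ⟨β, hβr, hβs, by rw [hβη, ← mul_assoc, hu]⟩
end

section
/- Let Λ be a row-finite k-graph such that the degree functor d is ℕ^k-primitive for Λ, i.e. Λ is primitive: there exists N > 0 in ℕ^k such that uΛ^M v ≠ ∅ for all vertices u, v and all M ≥ N. Then the system (Λ, ℕ^k, d) is cofinal: for all vertices v, w and all a, b ∈ ℕ^k there exists N' ∈ ℕ^k such that for every α ∈ wΛ^{N'} there exists β ∈ vΛs(α) with a + d(β) = b + d(α). -/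
/-- if `Λ` is primitive (the degree functor is `ℕᵏ`-primitive) then the
system `(Λ, ℕᵏ, d)` is cofinal. -/
theorem systemCofinal_of_primitive {k : ℕ} (Λ : KGraph k) (hrf : Λ.RowFinite)
    (hprim : ∃ N : Fin k → ℕ, 0 < N ∧ ∀ (u v : Λ.Obj) (M : Fin k → ℕ), N ≤ M →
      ∃ f, Λ.r f = u ∧ Λ.s f = v ∧ Λ.d f = M) :
    ∀ (v w : Λ.Obj) (a b : Fin k → ℕ), ∃ N' : Fin k → ℕ,
      ∀ α, Λ.r α = w → Λ.d α = N' →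
        ∃ β, Λ.r β = v ∧ Λ.s β = Λ.s α ∧ a + Λ.d β = b + Λ.d α := by
  obtain ⟨N, hN0, hN⟩ := hprim
  intro v w a b
  refine ⟨N + a, fun α hr hd => ?_⟩
  obtain ⟨β, hrβ, hsβ, hdβ⟩ := hN v (Λ.s α) (N + b) (le_add_right le_rfl)
  refine ⟨β, hrβ, hsβ, ?_⟩
  rw [hdβ, hd]
  funext i
  simp only [Pi.add_apply]
  omega
end

section
/- Let Λ be a row-finite k-graph with no sources, G a countable discrete group, and η : Λ → G a functor. If the system (Λ, G, η) is cofinal, then Γ(η) = G. -/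
/-- if the system `(Λ, G, η)` is cofinal then
`Γ(η) = {η(λ)η(μ)⁻¹ : s(λ) = s(μ)}` is all of `G`. -/
theorem gammaEta_eq_univ_of_systemCofinal {k : ℕ} (Λ : KGraph k)
    (hrf : Λ.RowFinite) (hns : Λ.NoSources) (hne : Nonempty Λ.Obj)
    (G : Type) [Group G] [Countable G] (η : Λ.Mor → G)
    (hη1 : ∀ v, η (Λ.ident v) = 1) (hη2 : ∀ f g h, η (Λ.comp f g h) = η f * η g)
    (hcof : Λ.SystemCofinal η) :
    {g : G | ∃ lam mu : Λ.Mor, Λ.s lam = Λ.s mu ∧ g = η lam * (η mu)⁻¹} =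
      Set.univ := by
  ext g
  simp only [Set.mem_setOf_eq, Set.mem_univ, iff_true]
  obtain ⟨v⟩ := hne
  obtain ⟨N, hN⟩ := hcof v v 1 g
  obtain ⟨α, hrα, hdα⟩ := hns v N
  obtain ⟨β, hrβ, hsβ, hβ⟩ := hN α hrα hdα
  exact ⟨β, α, hsβ, by rw [one_mul] at hβ; rw [hβ]; group⟩
end

section
/- Let Λ be a row-finite k-graph with no sources, v a vertex, and n ∈ ℕ^k. Then V(n,v) is finite, and if V(n,v) = V(n − e_i, v) for some 1 ≤ i ≤ k with n_i ≥ 1, then V(n + r e_i, v) = V(n − e_i, v) for all r ≥ 0. -/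
private lemma Vset_mono {k : ℕ} (Λ : KGraph k) (v : Λ.Obj) {m n : Fin k → ℕ}
    (h : m ≤ n) : Λ.Vset m v ⊆ Λ.Vset n v := by
  rintro w ⟨f, h1, h2, h3⟩
  exact ⟨f, h1, h2, h3.trans h⟩

private lemma Vset_step {k : ℕ} (Λ : KGraph k) (v : Λ.Obj) (m : Fin k → ℕ) (i : Fin k)
    (hmi : 1 ≤ m i) (hsub : Λ.Vset m v ⊆ Λ.Vset (m - Pi.single i 1) v) :
    Λ.Vset (m + Pi.single i 1) v ⊆ Λ.Vset m v := by
  rintro w ⟨f, hrf, hsf, hdf⟩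
  by_cases hle : Λ.d f ≤ m
  · exact ⟨f, hrf, hsf, hle⟩
  · rw [Pi.le_def] at hle
    push_neg at hle
    obtain ⟨j, hj⟩ := hle
    have hji : j = i := by
      by_contra hc
      have := hdf j
      simp only [Pi.add_apply, Pi.single_apply, if_neg hc] at this
      omega
    subst hji
    have hfi : 1 ≤ Λ.d f j := by omega
    have hfac : Λ.d f = (Λ.d f - Pi.single j 1) + Pi.single j 1 := by
      funext t
      by_cases ht : t = j <;> simp [Pi.single_apply, ht] <;> omega
    obtain ⟨⟨g, h⟩, ⟨hdg, hsr, hcomp⟩, -⟩ :=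
      Λ.factor f (Λ.d f - Pi.single j 1) (Pi.single j 1) hfac
    have hrg : Λ.r g = v := by rw [← hrf, ← hcomp, Λ.r_comp]
    have hdgm : Λ.d g ≤ m := by
      rw [hdg]
      intro t
      have := hdf t
      by_cases ht : t = j <;> simp [Pi.single_apply, ht] at this ⊢ <;> omega
    obtain ⟨g', hrg', hsg', hdg'⟩ := hsub ⟨g, hrg, rfl, hdgm⟩
    have hdh : Λ.d h = Pi.single j 1 := by
      have hdc := Λ.d_comp g h hsr
      rw [hcomp] at hdc
      funext t
      have h1 := congrFun hdc t
      rw [hdg] at h1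
      have h2 := hdf t
      by_cases ht : t = j <;> simp [Pi.single_apply, ht] at h1 h2 ⊢ <;> omega
    have hsr' : Λ.s g' = Λ.r h := hsg'.trans hsr
    refine ⟨Λ.comp g' h hsr', ?_, ?_, ?_⟩
    · rw [Λ.r_comp, hrg']
    · rw [Λ.s_comp, ← hsf, ← hcomp, Λ.s_comp]
    · rw [Λ.d_comp, hdh]
      intro t
      have := hdg' t
      by_cases ht : t = j <;> simp [Pi.single_apply, ht] at this ⊢ <;> omega

/-- `V(n,v)` is finite, and if `V(n,v) = V(n - eᵢ, v)` then
`V(n + r·eᵢ, v) = V(n - eᵢ, v)` for all `r ≥ 0`. -/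
theorem Vset_finite_and_stabilizes {k : ℕ} (Λ : KGraph k)
    (hrf : Λ.RowFinite) (hns : Λ.NoSources) (v : Λ.Obj) (n : Fin k → ℕ) :
    (Λ.Vset n v).Finite ∧
    ∀ i : Fin k, 1 ≤ n i → Λ.Vset n v = Λ.Vset (n - Pi.single i 1) v →
      ∀ r : ℕ, Λ.Vset (n + r • Pi.single i 1) v = Λ.Vset (n - Pi.single i 1) v := by
  constructor
  · have hfin : {f : Λ.Mor | Λ.r f = v ∧ Λ.d f ≤ n}.Finite := by
      refine ((Set.Finite.biUnion (Set.finite_Iic n) (fun m _ => hrf v m)).subset ?_)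
      rintro f ⟨h1, h2⟩
      exact Set.mem_biUnion h2 ⟨h1, rfl⟩
    have himg : Λ.Vset n v = Λ.s '' {f : Λ.Mor | Λ.r f = v ∧ Λ.d f ≤ n} := by
      ext w
      constructor
      · rintro ⟨f, h1, h2, h3⟩; exact ⟨f, ⟨h1, h3⟩, h2⟩
      · rintro ⟨f, ⟨h1, h3⟩, h2⟩; exact ⟨f, h1, h2, h3⟩
    rw [himg]
    exact hfin.image _
  · intro i hni heq r
    have key : ∀ r : ℕ, Λ.Vset (n + r • Pi.single i 1) v = Λ.Vset (n - Pi.single i 1) v ∧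
        Λ.Vset (n + (r + 1) • Pi.single i 1) v = Λ.Vset (n - Pi.single i 1) v := by
      intro r
      induction r with
      | zero =>
        have h0 : n + (0 : ℕ) • Pi.single i (1 : ℕ) = n := by simp
        have h1 : n + (1 : ℕ) • Pi.single i (1 : ℕ) = n + Pi.single i 1 := by simp
        rw [h0, h1]
        refine ⟨heq, ?_⟩
        have hstep := Vset_step Λ v n i hni (heq.le)
        have : Λ.Vset (n + Pi.single i 1) v = Λ.Vset n v :=
          le_antisymm hstep (Vset_mono Λ v (by intro t; simp))
        rw [this, heq]
      | succ s ih =>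
        refine ⟨ih.2, ?_⟩
        set m := n + (s + 1) • Pi.single i (1 : ℕ) with hm
        have hmi : 1 ≤ m i := by
          simp [hm, Pi.single_apply]
          omega
        have hmsub : m - Pi.single i 1 = n + s • Pi.single i (1 : ℕ) := by
          funext t
          by_cases ht : t = i <;> simp [hm, Pi.single_apply, ht] <;> omega
        have hsub : Λ.Vset m v ⊆ Λ.Vset (m - Pi.single i 1) v := by
          rw [hmsub, ih.2, ← ih.1]
        have hstep := Vset_step Λ v m i hmi hsub
        have hm1 : n + (s + 1 + 1) • Pi.single i (1 : ℕ) = m + Pi.single i 1 := by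
          funext t
          by_cases ht : t = i <;> simp [hm, Pi.single_apply, ht] <;> omega
        rw [hm1]
        refine le_antisymm (hstep.trans ih.2.le) ?_
        rw [← ih.2]
        exact Vset_mono Λ v (by intro t; simp)
    exact (key r).1
end
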